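/- Assume: (i) the only operator A ∈ B(K₀,H₀) with T₀A = AT̃₀ is A = 0, and (ii) the only operator B ∈ B(H₁,K₁) with T̃₁B = BT₁ is B = 0. Suppose there is a unitary U : H₀⊕H₁ → K₀⊕K₁ with blocks U_{ij} such that UT = T̃U. Define S₀ := Y∘U₁₀ − U₀₁∘X* ∈ B(H₀,K₀) and S₁ := U₀₁*∘Y − X*∘U₁₀* ∈ B(K₁,H₁). Then T̃₀S₀ = S₀T₀ and T₁S₁ = S₁T̃₁; moreover U₀₁* ∈ B(K₀,H₁) and U₁₀ ∈ B(H₀,K₁) are invertible, and the invertible operator Z := U₀₁* ⊕ U₁₀ : K₀⊕H₀ → H₁⊕K₁ satisfies Z∘F = F̃∘Z, where F := [[T̃₀, S₀],[0,T₀]] on K₀⊕H₀ and F̃ := [[T₁, S₁],[0,T̃₁]] on H₁⊕K₁; in particular F and F̃ are similar. -/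

import Mathlib

open ContinuousLinearMap

noncomputable def blockOp {H₀ H₁ K₀ K₁ : Type*}
    [NormedAddCommGroup H₀] [InnerProductSpace ℂ H₀]
    [NormedAddCommGroup H₁] [InnerProductSpace ℂ H₁]
    [NormedAddCommGroup K₀] [InnerProductSpace ℂ K₀]
    [NormedAddCommGroup K₁] [InnerProductSpace ℂ K₁]
    (A : H₀ →L[ℂ] K₀) (B : H₁ →L[ℂ] K₀) (C : H₀ →L[ℂ] K₁) (D : H₁ →L[ℂ] K₁) :
    WithLp 2 (H₀ × H₁) →L[ℂ] WithLp 2 (K₀ × K₁) :=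
  (((WithLp.prodContinuousLinearEquiv 2 ℂ K₀ K₁).symm : (K₀ × K₁) →L[ℂ] WithLp 2 (K₀ × K₁)) ∘L
    ((A.coprod B).prod (C.coprod D))) ∘L
    ((WithLp.prodContinuousLinearEquiv 2 ℂ H₀ H₁ : WithLp 2 (H₀ × H₁) →L[ℂ] (H₀ × H₁)))


section helpers
variable {H₀ H₁ K₀ K₁ L₀ L₁ : Type*}
    [NormedAddCommGroup H₀] [InnerProductSpace ℂ H₀]
    [NormedAddCommGroup H₁] [InnerProductSpace ℂ H₁]
    [NormedAddCommGroup K₀] [InnerProductSpace ℂ K₀]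
    [NormedAddCommGroup K₁] [InnerProductSpace ℂ K₁]
    [NormedAddCommGroup L₀] [InnerProductSpace ℂ L₀]
    [NormedAddCommGroup L₁] [InnerProductSpace ℂ L₁]

lemma blockOp_apply (A : H₀ →L[ℂ] K₀) (B : H₁ →L[ℂ] K₀) (C : H₀ →L[ℂ] K₁) (D : H₁ →L[ℂ] K₁)
    (x : WithLp 2 (H₀ × H₁)) :
    blockOp A B C D x = (WithLp.prodContinuousLinearEquiv 2 ℂ K₀ K₁).symm
      (A x.fst + B x.snd, C x.fst + D x.snd) := rfl

lemma blockOp_comp (A : K₀ →L[ℂ] L₀) (B : K₁ →L[ℂ] L₀) (C : K₀ →L[ℂ] L₁) (D : K₁ →L[ℂ] L₁)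
    (A' : H₀ →L[ℂ] K₀) (B' : H₁ →L[ℂ] K₀) (C' : H₀ →L[ℂ] K₁) (D' : H₁ →L[ℂ] K₁) :
    blockOp A B C D ∘L blockOp A' B' C' D' =
      blockOp (A ∘L A' + B ∘L C') (A ∘L B' + B ∘L D')
        (C ∘L A' + D ∘L C') (C ∘L B' + D ∘L D') := by
  ext x; simp [blockOp_apply]; exact ⟨by abel, by abel⟩

lemma blockOp_id : (blockOp (1 : H₀ →L[ℂ] H₀) 0 0 (1 : H₁ →L[ℂ] H₁)) = ContinuousLinearMap.id ℂ _ := by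
  ext x <;> simp [blockOp_apply] <;> rfl

lemma blockOp_inj {A A' : H₀ →L[ℂ] K₀} {B B' : H₁ →L[ℂ] K₀} {C C' : H₀ →L[ℂ] K₁} {D D' : H₁ →L[ℂ] K₁}
    (h : blockOp A B C D = blockOp A' B' C' D') : A = A' ∧ B = B' ∧ C = C' ∧ D = D' := by
  refine ⟨?_, ?_, ?_, ?_⟩ <;> ext v
  · have := congrArg (fun f => (f ((WithLp.prodContinuousLinearEquiv 2 ℂ H₀ H₁).symm (v, 0))).fst) h
    simpa [blockOp_apply] using this
  · have := congrArg (fun f => (f ((WithLp.prodContinuousLinearEquiv 2 ℂ H₀ H₁).symm (0, v))).fst) h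
    simpa [blockOp_apply] using this
  · have := congrArg (fun f => (f ((WithLp.prodContinuousLinearEquiv 2 ℂ H₀ H₁).symm (v, 0))).snd) h
    simpa [blockOp_apply] using this
  · have := congrArg (fun f => (f ((WithLp.prodContinuousLinearEquiv 2 ℂ H₀ H₁).symm (0, v))).snd) h
    simpa [blockOp_apply] using this

lemma blockOp_adjoint [CompleteSpace H₀] [CompleteSpace H₁] [CompleteSpace K₀] [CompleteSpace K₁]
    (A : H₀ →L[ℂ] K₀) (B : H₁ →L[ℂ] K₀) (C : H₀ →L[ℂ] K₁) (D : H₁ →L[ℂ] K₁) :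
    adjoint (blockOp A B C D) = blockOp (adjoint A) (adjoint C) (adjoint B) (adjoint D) := by
  symm
  rw [eq_adjoint_iff]
  intro x y
  simp [blockOp_apply, WithLp.prod_inner_apply, inner_add_left, inner_add_right,
    adjoint_inner_left]
  ring

lemma intertwine_adjoint {E F : Type*} [NormedAddCommGroup E] [InnerProductSpace ℂ E]
    [CompleteSpace E] [NormedAddCommGroup F] [InnerProductSpace ℂ F] [CompleteSpace F]
    (U : E →L[ℂ] F) (T : E →L[ℂ] E) (T' : F →L[ℂ] F)
    (hU1 : adjoint U ∘L U = ContinuousLinearMap.id ℂ E)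
    (hU2 : U ∘L adjoint U = ContinuousLinearMap.id ℂ F)
    (h : U ∘L T = T' ∘L U) : T ∘L adjoint U = adjoint U ∘L T' := by
  have h1 : T = (adjoint U ∘L T') ∘L U := by
    have := congrArg (fun f => adjoint U ∘L f) h
    simpa only [← comp_assoc, hU1, id_comp] using this
  rw [h1, comp_assoc, hU2, comp_id]

end helpers

set_option maxHeartbeats 1000000 in
/-- if `UT = T̃U` for a unitary `U` with blocks `U_{ij}`, and the intertwining
kernels `ker σ_{T₀,T̃₀}` and `ker σ_{T̃₁,T₁}` are trivial, then with
`S₀ = YU₁₀ - U₀₁X*` and `S₁ = U₀₁*Y - X*U₁₀*`, the operators `F = [[T̃₀,S₀],[0,T₀]]` and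
`F̃ = [[T₁,S₁],[0,T̃₁]]` satisfy `ZF = F̃Z` for the invertible `Z = U₀₁* ⊕ U₁₀`. -/
theorem stmt5 {H₀ H₁ K₀ K₁ : Type*}
    [NormedAddCommGroup H₀] [InnerProductSpace ℂ H₀] [CompleteSpace H₀]
    [NormedAddCommGroup H₁] [InnerProductSpace ℂ H₁] [CompleteSpace H₁]
    [NormedAddCommGroup K₀] [InnerProductSpace ℂ K₀] [CompleteSpace K₀]
    [NormedAddCommGroup K₁] [InnerProductSpace ℂ K₁] [CompleteSpace K₁]
    (T₀ : H₀ →L[ℂ] H₀) (T₁ : H₁ →L[ℂ] H₁) (X : H₁ →L[ℂ] H₀)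
    (T' : K₀ →L[ℂ] K₀) (T'' : K₁ →L[ℂ] K₁) (Y : K₁ →L[ℂ] K₀)
    (h1 : ∀ A : K₀ →L[ℂ] H₀, T₀ ∘L A = A ∘L T' → A = 0)
    (h2 : ∀ B : H₁ →L[ℂ] K₁, T'' ∘L B = B ∘L T₁ → B = 0)
    (U₀₀ : H₀ →L[ℂ] K₀) (U₀₁ : H₁ →L[ℂ] K₀) (U₁₀ : H₀ →L[ℂ] K₁) (U₁₁ : H₁ →L[ℂ] K₁)
    (U : WithLp 2 (H₀ × H₁) →L[ℂ] WithLp 2 (K₀ × K₁))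
    (hU : U = blockOp U₀₀ U₀₁ U₁₀ U₁₁)
    (hU1 : adjoint U ∘L U = ContinuousLinearMap.id ℂ _)
    (hU2 : U ∘L adjoint U = ContinuousLinearMap.id ℂ _)
    (hUT : U ∘L blockOp T₀ (X ∘L T₁ - T₀ ∘L X) 0 T₁
        = blockOp T' (Y ∘L T'' - T' ∘L Y) 0 T'' ∘L U)
    (S₀ : H₀ →L[ℂ] K₀) (hS₀ : S₀ = Y ∘L U₁₀ - U₀₁ ∘L adjoint X)
    (S₁ : K₁ →L[ℂ] H₁) (hS₁ : S₁ = adjoint U₀₁ ∘L Y - adjoint X ∘L adjoint U₁₀) :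
    T' ∘L S₀ = S₀ ∘L T₀ ∧
    T₁ ∘L S₁ = S₁ ∘L T'' ∧
    (∃ W : H₁ →L[ℂ] K₀, adjoint U₀₁ ∘L W = 1 ∧ W ∘L adjoint U₀₁ = 1) ∧
    (∃ V : K₁ →L[ℂ] H₀, U₁₀ ∘L V = 1 ∧ V ∘L U₁₀ = 1) ∧
    (∃ Zinv : WithLp 2 (H₁ × K₁) →L[ℂ] WithLp 2 (K₀ × H₀),
      blockOp (adjoint U₀₁) 0 0 U₁₀ ∘L Zinv = 1 ∧
      Zinv ∘L blockOp (adjoint U₀₁) 0 0 U₁₀ = 1) ∧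
    blockOp (adjoint U₀₁) 0 0 U₁₀ ∘L blockOp T' S₀ 0 T₀
      = blockOp T₁ S₁ 0 T'' ∘L blockOp (adjoint U₀₁) 0 0 U₁₀ := by
  subst hU hS₀ hS₁
  -- adjoint intertwining
  have hTU := intertwine_adjoint _ _ _ hU1 hU2 hUT
  rw [blockOp_adjoint] at hTU hU1 hU2
  rw [blockOp_comp] at hTU hU1 hU2 hUT
  rw [blockOp_comp] at hTU hUT
  rw [← blockOp_id] at hU1 hU2
  obtain ⟨u1, u2, u3, u4⟩ := blockOp_inj hU1
  obtain ⟨v1, v2, v3, v4⟩ := blockOp_inj hU2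
  obtain ⟨a, b, c, d⟩ := blockOp_inj hUT
  obtain ⟨e, f, g, h⟩ := blockOp_inj hTU
  clear hU1 hU2 hUT hTU
  simp only [zero_comp, comp_zero, add_zero, zero_add] at u1 u2 u3 u4 v1 v2 v3 v4 a b c d e f g h
  -- derived basic relations
  have hA : adjoint U₀₀ = X ∘L adjoint U₀₁ := by
    have key : T₀ ∘L (adjoint U₀₀ - X ∘L adjoint U₀₁)
        = (adjoint U₀₀ - X ∘L adjoint U₀₁) ∘L T' := by
      rw [comp_sub, sub_comp, ← e, comp_assoc, ← g]
      simp only [sub_comp, comp_assoc]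
      abel
    have h0 := h1 _ key
    rwa [sub_eq_zero] at h0
  have hA' : U₀₀ = U₀₁ ∘L adjoint X := by
    have := congrArg adjoint hA
    rwa [adjoint_adjoint, adjoint_comp, adjoint_adjoint] at this
  have hB : U₁₁ = -(U₁₀ ∘L X) := by
    have key : T'' ∘L (U₁₀ ∘L X + U₁₁) = (U₁₀ ∘L X + U₁₁) ∘L T₁ := by
      rw [comp_add, add_comp, ← d, ← comp_assoc, ← c]
      simp only [comp_sub, add_comp, comp_assoc]
      abel
    have h0 := h2 _ key
    exact (eq_neg_of_add_eq_zero_right h0)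
  have hB' : adjoint U₁₁ = -(adjoint X ∘L adjoint U₁₀) := by
    symm
    rw [eq_adjoint_iff]
    intro x y
    simp [hB, adjoint_inner_left]
  -- the key mixed relation
  have dag : adjoint U₀₁ ∘L (U₀₁ ∘L adjoint X) = adjoint X ∘L (adjoint U₁₀ ∘L U₁₀) := by
    have h0 := u3
    rw [hA', hB'] at h0
    simp only [neg_comp, ← comp_assoc] at h0
    have h0' : adjoint U₀₁ ∘L U₀₁ ∘L adjoint X - adjoint X ∘L adjoint U₁₀ ∘L U₁₀ = 0 := by
      rw [sub_eq_add_neg]; simpa [comp_assoc, neg_comp] using h0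
    have := sub_eq_zero.mp h0'
    simpa only [comp_assoc] using this
  have u4' : adjoint U₀₁ ∘L U₀₁ + adjoint X ∘L (adjoint U₁₀ ∘L (U₁₀ ∘L X)) = 1 := by
    have h0 := u4
    rw [hB', hB] at h0
    simpa only [neg_comp, comp_neg, neg_neg, comp_assoc] using h0
  have u1' : X ∘L (adjoint U₀₁ ∘L (U₀₁ ∘L adjoint X)) + adjoint U₁₀ ∘L U₁₀ = 1 := by
    have h0 := u1
    rw [hA, hA'] at h0
    simpa only [comp_assoc] using h0
  have v1' : U₀₁ ∘L (adjoint X ∘L (X ∘L adjoint U₀₁)) + U₀₁ ∘L adjoint U₀₁ = 1 := by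
    have h0 := v1
    rw [hA, hA'] at h0
    simpa only [comp_assoc] using h0
  have v4' : U₁₀ ∘L adjoint U₁₀ + U₁₀ ∘L (X ∘L (adjoint X ∘L adjoint U₁₀)) = 1 := by
    have h0 := v4
    rw [hB', hB] at h0
    simpa only [neg_comp, comp_neg, neg_neg, comp_assoc] using h0
  -- goal 1
  have G1 : T' ∘L (Y ∘L U₁₀ - U₀₁ ∘L adjoint X) = (Y ∘L U₁₀ - U₀₁ ∘L adjoint X) ∘L T₀ := by
    rw [← hA', comp_sub, sub_comp, a, comp_assoc, c]
    simp only [sub_comp, comp_assoc]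
    abel
  -- goal 2
  have hB'' : adjoint X ∘L adjoint U₁₀ = -(adjoint U₁₁) := by rw [hB', neg_neg]
  have G2 : T₁ ∘L (adjoint U₀₁ ∘L Y - adjoint X ∘L adjoint U₁₀)
      = (adjoint U₀₁ ∘L Y - adjoint X ∘L adjoint U₁₀) ∘L T'' := by
    rw [hB'', sub_neg_eq_add, comp_add, add_comp, h, ← comp_assoc, g]
    simp only [comp_sub, add_comp, comp_assoc]
    abel
  -- inverses
  set W : H₁ →L[ℂ] K₀ := U₀₁ ∘L (1 + adjoint X ∘L X) with hW
  set V : K₁ →L[ℂ] H₀ := (1 + X ∘L adjoint X) ∘L adjoint U₁₀ with hV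
  have dagX : adjoint U₀₁ ∘L (U₀₁ ∘L (adjoint X ∘L X)) = adjoint X ∘L (adjoint U₁₀ ∘L (U₁₀ ∘L X)) := by
    have h0 := congrArg (fun φ => φ ∘L X) dag
    simpa only [comp_assoc] using h0
  have dagY : U₀₁ ∘L (adjoint X ∘L (X ∘L adjoint U₀₁)) = U₀₀ ∘L adjoint U₀₀ := by
    rw [hA, hA']
    simp only [comp_assoc]
  have GW1 : adjoint U₀₁ ∘L W = 1 := by
    rw [hW]
    simp only [comp_add, one_def, comp_id]
    rw [dagX]
    exact u4'
  have GW2 : W ∘L adjoint U₀₁ = 1 := by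
    rw [hW]
    simp only [add_comp, comp_add, one_def, id_comp, comp_id, comp_assoc]
    rw [add_comm]
    exact v1'
  have GV1 : U₁₀ ∘L V = 1 := by
    rw [hV]
    simp only [add_comp, comp_add, one_def, id_comp, comp_id, comp_assoc]
    exact v4'
  have GV2 : V ∘L U₁₀ = 1 := by
    rw [hV]
    simp only [add_comp, comp_add, one_def, id_comp, comp_id, comp_assoc]
    rw [← dag, add_comm]
    exact u1'
  have GZ1 : blockOp (adjoint U₀₁) 0 0 U₁₀ ∘L blockOp W 0 0 V = 1 := by
    rw [blockOp_comp]
    simp only [comp_zero, zero_comp, add_zero, zero_add]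
    rw [GW1, GV1, blockOp_id]
    rfl
  have GZ2 : blockOp W 0 0 V ∘L blockOp (adjoint U₀₁) 0 0 U₁₀ = 1 := by
    rw [blockOp_comp]
    simp only [comp_zero, zero_comp, add_zero, zero_add]
    rw [GW2, GV2, blockOp_id]
    rfl
  have G6b : adjoint U₀₁ ∘L (Y ∘L U₁₀ - U₀₁ ∘L adjoint X)
      = (adjoint U₀₁ ∘L Y - adjoint X ∘L adjoint U₁₀) ∘L U₁₀ := by
    simp only [comp_sub, sub_comp, comp_assoc]
    rw [dag]
  have G6 : blockOp (adjoint U₀₁) 0 0 U₁₀ ∘L blockOp T' (Y ∘L U₁₀ - U₀₁ ∘L adjoint X) 0 T₀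
      = blockOp T₁ (adjoint U₀₁ ∘L Y - adjoint X ∘L adjoint U₁₀) 0 T''
        ∘L blockOp (adjoint U₀₁) 0 0 U₁₀ := by
    rw [blockOp_comp, blockOp_comp]
    simp only [comp_zero, zero_comp, add_zero, zero_add]
    rw [← g, G6b, c]
  exact ⟨G1, G2, ⟨W, GW1, GW2⟩, ⟨V, GV1, GV2⟩, ⟨blockOp W 0 0 V, GZ1, GZ2⟩, G6⟩
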